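/- Let q be a conjunctive query over a schema R, D a database for R, and Σ a set of TGDs over R in normal form. Then ans(q_Σ,D,Σ) ⊆ q_Σ(D); equivalently, q_Σ(chase(D,Σ)) ⊆ q_Σ(D), where for a set of CQs Q we put Q(I) = ∪_{q′∈Q} q′(I). -/

import Mathlib

namespace OntDB

/-- Terms: constants, labeled nulls, and variables (each indexed by naturals). -/
inductive Term : Type
  | const : ℕ → Term
  | null  : ℕ → Term
  | var   : ℕ → Term
deriving DecidableEq

/-- a term is not a labeled null -/
def Term.noNull : Term → Prop
  | .null _ => False
  | _ => True

/-- Atoms: a predicate symbol applied to a list of argument terms. -/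
structure Atom : Type where
  pred : ℕ
  args : List Term
deriving DecidableEq

/-- A relational schema: a finite set of predicate symbols, each with an arity. -/
structure Schema : Type where
  preds : Finset ℕ
  ar : ℕ → ℕ

/-- arity(R) : the maximum arity over the predicates of R -/
def Schema.maxArity (R : Schema) : ℕ := R.preds.sup R.ar

def Atom.overSchema (R : Schema) (a : Atom) : Prop :=
  a.pred ∈ R.preds ∧ a.args.length = R.ar a.pred

/-- applying a substitution to an atom -/
def Atom.subst (h : Term → Term) (a : Atom) : Atom := ⟨a.pred, a.args.map h⟩

/-- a substitution fixes every constant -/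
def constFix (h : Term → Term) : Prop := ∀ c, h (Term.const c) = Term.const c

/-- A homomorphism from the set of atoms `A` to the set of atoms `A'`. -/
def IsHom (h : Term → Term) (A A' : Set Atom) : Prop :=
  constFix h ∧ ∀ a ∈ A, a.subst h ∈ A'

/-- the variables occurring in an atom -/
def Atom.vars (a : Atom) : Finset ℕ :=
  (a.args.filterMap (fun t => match t with | .var v => some v | _ => none)).toFinset

/-- the number of occurrences of the variable `v` in the atom `a` -/
def Atom.countVar (a : Atom) (v : ℕ) : ℕ := a.args.count (Term.var v)

/-- the variables occurring in a finite set of atoms -/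
def varsOfSet (S : Finset Atom) : Finset ℕ := S.sup Atom.vars

/-- A conjunctive query: a head atom together with a finite set of body atoms. -/
structure CQ : Type where
  head : Atom
  body : Finset Atom
deriving DecidableEq

/-- the variables occurring in a CQ (head and body) -/
def CQ.vars (q : CQ) : Finset ℕ := q.head.vars ∪ varsOfSet q.body

/-- the number of occurrences of the variable `v` in the CQ `q` (head and body) -/
def CQ.countVar (q : CQ) (v : ℕ) : ℕ := q.head.countVar v + ∑ a ∈ q.body, a.countVar v

/-- a variable is shared in `q` if it occurs more than once in `q` -/
def CQ.shared (q : CQ) (v : ℕ) : Prop := 2 ≤ q.countVar v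

/-- a CQ over a schema: body atoms over the schema, and no labeled nulls occur -/
def CQ.overSchema (R : Schema) (q : CQ) : Prop :=
  (∀ a ∈ q.body, a.overSchema R ∧ ∀ t ∈ a.args, t.noNull) ∧ ∀ t ∈ q.head.args, t.noNull

/-- a tuple of constants -/
def isConstTuple (t : List Term) : Prop := ∀ s ∈ t, ∃ c, s = Term.const c

/-- Evaluation of a CQ over an instance: the tuples of constants obtained as images
of the distinguished terms under homomorphisms of the body into the instance. -/
def CQ.eval (q : CQ) (I : Set Atom) : Set (List Term) :=
  { t | isConstTuple t ∧ ∃ h : Term → Term, IsHom h ↑q.body I ∧ q.head.args.map h = t }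

/-- evaluation of a (possibly infinite) union of CQs -/
def ucqEval (Q : Set CQ) (I : Set Atom) : Set (List Term) := ⋃ q ∈ Q, q.eval I

/-- A TGD (in normal form representation): a finite set of body atoms plus a single
head atom; the existentially quantified variables are exactly the head variables
that do not occur in the body. -/
structure TGD : Type where
  body : Finset Atom
  head : Atom
deriving DecidableEq

/-- the universally quantified variables occurring in the head -/
def TGD.frontier (σ : TGD) : Finset ℕ := varsOfSet σ.body ∩ σ.head.vars

/-- the existentially quantified variables -/
def TGD.exVars (σ : TGD) : Finset ℕ := σ.head.vars \ varsOfSet σ.body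

def TGD.vars (σ : TGD) : Finset ℕ := varsOfSet σ.body ∪ σ.head.vars

/-- normal form: at most one existentially quantified variable, occurring once -/
def TGD.NormalForm (σ : TGD) : Prop :=
  σ.exVars.card ≤ 1 ∧ ∀ v ∈ σ.exVars, σ.head.countVar v = 1

/-- a TGD is linear if its body consists of a single atom -/
def TGD.Linear (σ : TGD) : Prop := σ.body.card = 1

/-- a set of TGDs is linear if all its members are -/
def LinearSet (Sig : Finset TGD) : Prop := ∀ σ ∈ Sig, σ.Linear

def TGD.overSchema (R : Schema) (σ : TGD) : Prop :=
  σ.body.Nonempty ∧ (∀ a ∈ σ.body, a.overSchema R ∧ ∀ t ∈ a.args, t.noNull) ∧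
  σ.head.overSchema R ∧ ∀ t ∈ σ.head.args, t.noNull

/-- satisfaction of a TGD by an instance -/
def TGD.sat (σ : TGD) (I : Set Atom) : Prop :=
  ∀ h : Term → Term, IsHom h ↑σ.body I →
    ∃ h' : Term → Term, constFix h' ∧
      (∀ v ∈ σ.frontier, h' (Term.var v) = h (Term.var v)) ∧ σ.head.subst h' ∈ I

/-- satisfaction of a set of TGDs -/
def satSet (Sig : Finset TGD) (I : Set Atom) : Prop := ∀ σ ∈ Sig, σ.sat I

/-- a database for a schema: a finite set of atoms over the schema whose
arguments are constants -/
def IsDatabase (R : Schema) (D : Finset Atom) : Prop :=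
  ∀ a ∈ D, a.overSchema R ∧ ∀ t ∈ a.args, ∃ c, t = Term.const c

/-- the certain answers of a CQ w.r.t. a database and a set of TGDs -/
def certAns (q : CQ) (D : Finset Atom) (Sig : Finset TGD) : Set (List Term) :=
  { t | ∀ I : Set Atom, ↑D ⊆ I → satSet Sig I → t ∈ q.eval I }

/-- the certain answers of a (possibly infinite) union of CQs -/
def certAnsUCQ (Q : Set CQ) (D : Finset Atom) (Sig : Finset TGD) : Set (List Term) :=
  { t | ∀ I : Set Atom, ↑D ⊆ I → satSet Sig I → t ∈ ucqEval Q I }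

/-- a unifier for a finite set of atoms -/
def IsUnifier (γ : Term → Term) (S : Finset Atom) : Prop :=
  constFix γ ∧ ∀ a ∈ S, ∀ b ∈ S, a.subst γ = b.subst γ

def Unifies (S : Finset Atom) : Prop := ∃ γ, IsUnifier γ S

/-- most general unifier -/
def IsMGU (γ : Term → Term) (S : Finset Atom) : Prop :=
  IsUnifier γ S ∧ ∀ γ', IsUnifier γ' S → ∃ δ : Term → Term, ∀ t, γ' t = δ (γ t)

/-- `i` is the position of the existentially quantified variable in head(σ) -/
def TGD.exPos (σ : TGD) (i : ℕ) : Prop :=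
  ∃ z ∈ σ.exVars, σ.head.args[i]? = some (Term.var z)

/-- applicability of the TGD σ to the set S ⊆ body(q) -/
def Applicable (q : CQ) (σ : TGD) (S : Finset Atom) : Prop :=
  S.Nonempty ∧ S ⊆ q.body ∧ Unifies (S ∪ {σ.head}) ∧
  ∀ a ∈ S, ∀ i, σ.exPos i →
    (∀ c, a.args[i]? ≠ some (Term.const c)) ∧
    ∀ v, a.args[i]? = some (Term.var v) → ¬ q.shared v

/-- factorizability of the set S ⊆ body(q) w.r.t. the TGD σ -/
def Factorizable (q : CQ) (σ : TGD) (S : Finset Atom) : Prop :=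
  S ⊆ q.body ∧ 2 ≤ S.card ∧ Unifies S ∧ (∃ i, σ.exPos i) ∧
  ∃ V : ℕ, V ∉ varsOfSet (q.body \ S) ∧
    ∀ a ∈ S, (∃ i, σ.exPos i ∧ a.args[i]? = some (Term.var V)) ∧
      ∀ j, a.args[j]? = some (Term.var V) → σ.exPos j

/-- renaming of variables -/
def renT (ρ : ℕ → ℕ) : Term → Term
  | .var v => .var (ρ v)
  | t => t

/-- renaming the variables of a TGD -/
def TGD.rename (σ : TGD) (ρ : ℕ → ℕ) : TGD :=
  ⟨σ.body.image (Atom.subst (renT ρ)), σ.head.subst (renT ρ)⟩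

/-- applying a substitution to a CQ -/
def CQ.subst (q : CQ) (γ : Term → Term) : CQ :=
  ⟨q.head.subst γ, q.body.image (Atom.subst γ)⟩

/-- the restriction on MGUs used by XRewrite under sticky sets of TGDs:
every variable of the protected set `W` (the variables of the input query) is
mapped to a variable of `W` (or to a constant).  For `W = ∅` no restriction. -/
def ProtectsVars (W : Finset ℕ) (γ : Term → Term) : Prop :=
  ∀ v ∈ W, (∃ u ∈ W, γ (Term.var v) = Term.var u) ∨ ∃ c, γ (Term.var v) = Term.const c

/-- the substitution is the identity on all variables outside `V` -/
def IdOutside (V : Finset ℕ) (γ : Term → Term) : Prop :=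
  ∀ v, v ∉ V → γ (Term.var v) = Term.var v

/-- one rewriting step of XRewrite (applied to `q`, producing `q'`) -/
def IsRewriteStep (Sig : Finset TGD) (W : Finset ℕ) (q q' : CQ) : Prop :=
  ∃ σ ∈ Sig, ∃ ρ : ℕ → ℕ, Function.Injective ρ ∧ (∀ v, ρ v ∉ q.vars) ∧
    ∃ S : Finset Atom, Applicable q (σ.rename ρ) S ∧
      ∃ γ : Term → Term, IsMGU γ (S ∪ {(σ.rename ρ).head}) ∧
        IdOutside (varsOfSet (S ∪ {(σ.rename ρ).head})) γ ∧ ProtectsVars W γ ∧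
        q' = (CQ.mk q.head ((q.body \ S) ∪ (σ.rename ρ).body)).subst γ

/-- one factorization step of XRewrite -/
def IsFactStep (Sig : Finset TGD) (W : Finset ℕ) (q q' : CQ) : Prop :=
  ∃ σ ∈ Sig, ∃ S : Finset Atom, Factorizable q σ S ∧
    ∃ γ : Term → Term, IsMGU γ S ∧ IdOutside (varsOfSet S) γ ∧ ProtectsVars W γ ∧
      q' = q.subst γ

/-- the CQs obtainable from q by a finite sequence of rewriting and
factorization steps -/
inductive Reach (Sig : Finset TGD) (W : Finset ℕ) (q : CQ) : CQ → Prop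
  | refl : Reach Sig W q q
  | rw {p p' : CQ} : Reach Sig W q p → IsRewriteStep Sig W p p' → Reach Sig W q p'
  | fact {p p' : CQ} : Reach Sig W q p → IsFactStep Sig W p p' → Reach Sig W q p'

/-- the output of XRewrite(q,Σ): q together with all CQs obtainable from q by a
finite sequence of rewriting and factorization steps whose last step is a
rewriting step -/
def XRewriteOut (Sig : Finset TGD) (W : Finset ℕ) (q : CQ) : Set CQ :=
  {q} ∪ { p' | ∃ p : CQ, Reach Sig W q p ∧ IsRewriteStep Sig W p p' }

/-- two CQs are the same up to bijective variable renaming -/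
def CQEquiv (p p' : CQ) : Prop :=
  ∃ ρ : ℕ → ℕ, Function.Bijective ρ ∧ p.subst (renT ρ) = p'

/-- the SMarking procedure: `Marked Sig σ v` says that the body variable `v` of
σ gets marked -/
inductive Marked (Sig : Finset TGD) : TGD → ℕ → Prop
  | init {σ : TGD} {v : ℕ} : σ ∈ Sig → v ∈ varsOfSet σ.body → v ∉ σ.head.vars →
      Marked Sig σ v
  | prop {σ σ' : TGD} {v : ℕ} (b : Atom) (u : ℕ → ℕ) : σ ∈ Sig → σ' ∈ Sig →
      v ∈ varsOfSet σ.body → v ∈ σ.head.vars → b ∈ σ'.body →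
      (∀ i : ℕ, σ.head.args[i]? = some (Term.var v) →
        b.args[i]? = some (Term.var (u i))) →
      (∀ i : ℕ, σ.head.args[i]? = some (Term.var v) → Marked Sig σ' (u i)) →
      Marked Sig σ v

/-- a set of TGDs is sticky if every marked variable occurs only once in the
body of its TGD -/
def Sticky (Sig : Finset TGD) : Prop :=
  ∀ σ ∈ Sig, ∀ v : ℕ, Marked Sig σ v → (∑ a ∈ σ.body, a.countVar v) = 1

/- ## Propagation graph and atom coverage -/

/-- a position of a schema: a predicate together with an argument index -/
abbrev Pos := ℕ × ℕ

/-- the edges of the propagation graph -/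
def PGEdge (σ : TGD) (pb ph : Pos) : Prop :=
  ∃ b ∈ σ.body, ∃ v : ℕ,
    b.pred = pb.1 ∧ b.args[pb.2]? = some (Term.var v) ∧
    σ.head.pred = ph.1 ∧ σ.head.args[ph.2]? = some (Term.var v)

/-- `vs` is a path in the propagation graph of Σ with edge labels `ls` -/
def IsPath (Sig : Finset TGD) (vs : List Pos) (ls : List TGD) : Prop :=
  vs.length = ls.length + 1 ∧
  ∀ j < ls.length, ∃ σ pb ph,
    ls[j]? = some σ ∧ vs[j]? = some pb ∧ vs[j + 1]? = some ph ∧ σ ∈ Sig ∧ PGEdge σ pb ph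

/-- a minimal path: no cycle is traversed twice consecutively -/
def MinimalPath (Sig : Finset TGD) (vs : List Pos) (ls : List TGD) : Prop :=
  IsPath Sig vs ls ∧
  ¬ ∃ i j : ℕ, 0 < i ∧ i + 1 < vs.length ∧ 0 < j ∧ j ≤ i ∧ i + j < vs.length ∧
      (∀ k ≤ j, vs[i - j + k]? = vs[i + k]?) ∧ ∀ k < j, ls[i - j + k]? = ls[i + k]?

/-- a tight sequence of (linear) TGDs -/
def TightSeq (σs : List TGD) : Prop :=
  ∀ j, j + 1 < σs.length →
    ∃ σ1 σ2, σs[j]? = some σ1 ∧ σs[j + 1]? = some σ2 ∧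
      ∃ h : Term → Term, constFix h ∧ σ2.body.image (Atom.subst h) = {σ1.head}

/-- a sequence of TGDs compatible to an atom -/
def CompatibleTo (σs : List TGD) (a : Atom) : Prop :=
  ∃ σ1, σs[0]? = some σ1 ∧ ∃ h : Term → Term, constFix h ∧
    σ1.body.image (Atom.subst h) = {a}

/-- pos(a,t): the positions (indices) at which the term t occurs in the atom a -/
def atomPos (a : Atom) (t : Term) : Set ℕ := { i | a.args[i]? = some t }

/-- T(q,a): the constants of a together with the variables of a shared in q -/
def Tq (q : CQ) (a : Atom) : Set Term :=
  { t | t ∈ a.args ∧ ((∃ c, t = Term.const c) ∨ ∃ v, t = Term.var v ∧ q.shared v) }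

/-- atom coverage: a covers b w.r.t. q and Σ -/
def Covers (Sig : Finset TGD) (q : CQ) (a b : Atom) : Prop :=
  (∀ t ∈ Tq q b, t ∈ a.args) ∧
  ∃ σs : List TGD, σs ≠ [] ∧ (∀ σ ∈ σs, σ ∈ Sig) ∧ TightSeq σs ∧ CompatibleTo σs a ∧
    ∀ t ∈ Tq q b, ∀ i ∈ atomPos b t,
      ∃ vs : List Pos, MinimalPath Sig vs σs ∧
        (∃ p0 : Pos, vs[0]? = some p0 ∧ p0.1 = a.pred ∧ p0.2 ∈ atomPos a t) ∧
        vs[vs.length - 1]? = some (b.pred, i)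


/- ### Part A : basic lemmas -/

open Classical

theorem Atom.subst_subst (a : Atom) (f g : Term → Term) :
    (a.subst f).subst g = a.subst (fun t => g (f t)) := by
  simp [Atom.subst, List.map_map, Function.comp]

theorem Atom.subst_congr {a : Atom} {f g : Term → Term}
    (h : ∀ t ∈ a.args, f t = g t) : a.subst f = a.subst g := by
  simp only [Atom.subst, Atom.mk.injEq, true_and]
  exact List.map_congr_left h

theorem Atom.getElem?_subst (a : Atom) (f : Term → Term) (i : ℕ) :
    (a.subst f).args[i]? = (a.args[i]?).map f := by
  simp [Atom.subst, List.getElem?_map]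

theorem Atom.mem_vars {a : Atom} {v : ℕ} : v ∈ a.vars ↔ Term.var v ∈ a.args := by
  simp only [Atom.vars, List.mem_toFinset, List.mem_filterMap]
  constructor
  · rintro ⟨t, ht, h⟩
    cases t <;> simp_all
  · intro h; exact ⟨Term.var v, h, rfl⟩

theorem mem_varsOfSet {S : Finset Atom} {v : ℕ} :
    v ∈ varsOfSet S ↔ ∃ a ∈ S, v ∈ a.vars := by
  simp [varsOfSet, Finset.mem_sup]

theorem count_pos_iff_mem {l : List Term} {t : Term} : 0 < l.count t ↔ t ∈ l :=
  List.count_pos_iff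

/-- two distinct positions with the same entry give count ≥ 2, and conversely -/
theorem two_le_count_of_two_pos {l : List Term} {t : Term} {i j : ℕ} (hij : i ≠ j)
    (hi : l[i]? = some t) (hj : l[j]? = some t) : 2 ≤ l.count t := by
  induction l generalizing i j with
  | nil => simp at hi
  | cons x xs ih =>
    rcases i with _ | i <;> rcases j with _ | j
    · exact absurd rfl hij
    · simp only [List.getElem?_cons_zero, Option.some.injEq] at hi
      have hm : t ∈ xs := List.mem_iff_getElem?.2 ⟨j, by simpa using hj⟩
      simpa [List.count_cons, hi] using hm
    · simp only [List.getElem?_cons_zero, Option.some.injEq] at hj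
      have hm : t ∈ xs := List.mem_iff_getElem?.2 ⟨i, by simpa using hi⟩
      simpa [List.count_cons, hj] using hm
    · have := ih (i := i) (j := j) (by omega) (by simpa using hi) (by simpa using hj)
      simp [List.count_cons]; omega

theorem two_pos_of_two_le_count {l : List Term} {t : Term} (h : 2 ≤ l.count t) :
    ∃ i j : ℕ, i ≠ j ∧ l[i]? = some t ∧ l[j]? = some t := by
  induction l with
  | nil => simp at h
  | cons x xs ih =>
    by_cases hx : x = t
    · subst hx
      have hc : (x::xs).count x = xs.count x + 1 := by simp [List.count_cons]
      rw [hc] at h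
      by_cases h1 : 2 ≤ xs.count x
      · obtain ⟨i, j, hij, hi, hj⟩ := ih h1
        exact ⟨i+1, j+1, by simpa using hij, by simpa using hi, by simpa using hj⟩
      · have : x ∈ xs := count_pos_iff_mem.1 (by omega)
        obtain ⟨n, hn⟩ := List.mem_iff_getElem?.1 this
        exact ⟨0, n+1, by simp, by simp, by simpa using hn⟩
    · have h2 : 2 ≤ xs.count t := by
        have hc : (x::xs).count t = xs.count t := by simp [List.count_cons, hx]
        omega
      obtain ⟨i, j, hij, hi, hj⟩ := ih h2
      exact ⟨i+1, j+1, by simpa using hij, by simpa using hi, by simpa using hj⟩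

/- ### encodings -/

def Term.toSum : Term → ℕ ⊕ ℕ ⊕ ℕ
  | .const n => .inl n
  | .null n => .inr (.inl n)
  | .var n => .inr (.inr n)

def Term.ofSum : ℕ ⊕ ℕ ⊕ ℕ → Term
  | .inl n => .const n
  | .inr (.inl n) => .null n
  | .inr (.inr n) => .var n

instance : Encodable Term :=
  Encodable.ofEquiv (ℕ ⊕ ℕ ⊕ ℕ)
    ⟨Term.toSum, Term.ofSum, fun t => by cases t <;> rfl,
      fun s => by rcases s with _ | _ | _ <;> rfl⟩

instance : Encodable Atom :=
  Encodable.ofEquiv (ℕ × List Term)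
    ⟨fun a => (a.pred, a.args), fun p => ⟨p.1, p.2⟩, fun _ => rfl, fun _ => rfl⟩

instance : Encodable TGD :=
  Encodable.ofEquiv (Finset Atom × Atom)
    ⟨fun σ => (σ.body, σ.head), fun p => ⟨p.1, p.2⟩, fun _ => rfl, fun _ => rfl⟩
/- ### Part B : the chase model -/

/-- code of the fresh null produced by applying σ with homomorphism h -/
noncomputable def nullCode (σ : TGD) (h : Term → Term) : ℕ :=
  Encodable.encode (σ, (σ.frontier.sort (· ≤ ·)).map (fun v => h (.var v)))

/-- extension of h sending the existential variables to the fresh null -/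
noncomputable def extH (σ : TGD) (h : Term → Term) : Term → Term :=
  fun t => match t with
  | .var v => if v ∈ σ.frontier then h (.var v) else .null (nullCode σ h)
  | t => t

theorem nullCode_inj {σ σ' : TGD} {h h' : Term → Term}
    (e : nullCode σ h = nullCode σ' h') :
    σ = σ' ∧ ∀ v ∈ σ.frontier, h (.var v) = h' (.var v) := by
  have := Encodable.encode_injective e
  obtain ⟨h1, h2⟩ := Prod.mk.injEq .. ▸ this
  refine ⟨h1, fun v hv => ?_⟩
  subst h1
  have := List.map_eq_map_iff.1 h2 v ((Finset.mem_sort _).2 hv)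
  simpa using this

/-- the (cumulative) chase of D with Sig -/
def Ch (D : Finset Atom) (Sig : Finset TGD) : ℕ → Atom → Prop
  | 0 => fun a => a ∈ D
  | (k+1) => fun a => Ch D Sig k a ∨
      ∃ σ ∈ Sig, ∃ h : Term → Term, constFix h ∧
        (∀ b ∈ σ.body, Ch D Sig k (b.subst h)) ∧ a = σ.head.subst (extH σ h)

variable {D : Finset Atom} {Sig : Finset TGD}

theorem Ch_mono {k k' : ℕ} (hk : k ≤ k') {a : Atom} (h : Ch D Sig k a) :
    Ch D Sig k' a := by
  induction k' with
  | zero => exact Nat.le_zero.1 hk ▸ h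
  | succ n ih =>
    rcases Nat.lt_or_ge k (n+1) with h1 | h1
    · exact Or.inl (ih (by omega))
    · exact (Nat.le_antisymm hk h1) ▸ h

/-- the chase instance -/
def ChI (D : Finset Atom) (Sig : Finset TGD) : Set Atom := {a | ∃ k, Ch D Sig k a}

theorem D_subset_ChI : ↑D ⊆ ChI D Sig := fun a ha => ⟨0, ha⟩

theorem exists_bound (s : Finset Atom) (F : Atom → Atom)
    (h : ∀ b ∈ s, ∃ k, Ch D Sig k (F b)) : ∃ K, ∀ b ∈ s, Ch D Sig K (F b) := by
  classical
  induction s using Finset.induction with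
  | empty => exact ⟨0, by simp⟩
  | @insert a s hnotmem ih =>
    obtain ⟨K, hK⟩ := ih (fun b hb => h b (Finset.mem_insert_of_mem hb))
    obtain ⟨k, hk⟩ := h a (Finset.mem_insert_self a s)
    exact ⟨max k K, fun b hb => by
      rcases Finset.mem_insert.1 hb with rfl | hb
      · exact Ch_mono (Nat.le_max_left _ _) hk
      · exact Ch_mono (Nat.le_max_right _ _) (hK b hb)⟩

theorem extH_constFix (σ : TGD) (h : Term → Term) : constFix (extH σ h) :=
  fun _ => rfl

theorem ChI_sat : satSet Sig (ChI D Sig) := by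
  intro σ hσ h hh
  refine ⟨extH σ h, extH_constFix σ h, fun v hv => by simp [extH, hv], ?_⟩
  have hprem : ∀ b ∈ σ.body, ∃ k, Ch D Sig k (b.subst h) := fun b hb => (hh.2 b hb)
  obtain ⟨K, hK⟩ := exists_bound σ.body (Atom.subst h) hprem
  exact ⟨K + 1, Or.inr ⟨σ, hσ, h, hh.1, hK, rfl⟩⟩

/-- minimal chase fuel of an atom -/
noncomputable def dA (D : Finset Atom) (Sig : Finset TGD) (c : Atom) : ℕ :=
  sInf {k | Ch D Sig k c}

theorem Ch_dA {c : Atom} (h : c ∈ ChI D Sig) : Ch D Sig (dA D Sig c) c :=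
  Nat.sInf_mem h

theorem not_Ch_of_lt_dA {c : Atom} {k : ℕ} (h : k < dA D Sig c) : ¬ Ch D Sig k c :=
  fun hc => absurd (Nat.sInf_le (show k ∈ {k | Ch D Sig k c} from hc))
    (Nat.not_le.2 h)

/- ### freshness of nulls -/

section Fresh

variable {R : Schema} {σ0 : TGD} {h0 : Term → Term}

/-- the key descent property of the null z = null (nullCode σ0 h0) -/
theorem null_descent (hover : ∀ σ ∈ Sig, σ.overSchema R) (hD : IsDatabase R D) :
    ∀ k c, Ch D Sig k c → (Term.null (nullCode σ0 h0)) ∈ c.args →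
      c = σ0.head.subst (extH σ0 h0) ∨
        ∃ k' < k, ∃ c', Ch D Sig k' c' ∧ (Term.null (nullCode σ0 h0)) ∈ c'.args := by
  intro k
  induction k with
  | zero =>
    intro c hc hz
    obtain ⟨cn, hcn⟩ := (hD c hc).2 _ hz
    cases hcn
  | succ n ih =>
    intro c hc hz
    rcases hc with hc | ⟨σ', hσ', h', hcf, hprem, rfl⟩
    · exact Or.inr ⟨n, by omega, c, hc, hz⟩
    · -- c = σ'.head.subst (extH σ' h')
      simp only [Atom.subst, List.mem_map] at hz
      obtain ⟨t, ht, hext⟩ := hz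
      match t, hext with
      | .null m, hext =>
        exact absurd ((hover σ' hσ').2.2.2 _ ht) (by simp [Term.noNull])
      | .var v, hext =>
        simp only [extH] at hext
        by_cases hv : v ∈ σ'.frontier
        · rw [if_pos hv] at hext
          -- the null is an h'-value of a frontier variable, go into a premise
          have hvb : v ∈ varsOfSet σ'.body := (Finset.mem_inter.1 hv).1
          obtain ⟨b, hb, hvb⟩ := mem_varsOfSet.1 hvb
          refine Or.inr ⟨n, by omega, b.subst h', hprem b hb, ?_⟩
          simp only [Atom.subst]
          exact List.mem_map.2 ⟨.var v, Atom.mem_vars.1 hvb, hext⟩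
        · rw [if_neg hv] at hext
          -- code equality
          have hcode : nullCode σ' h' = nullCode σ0 h0 := by
            injection hext
          obtain ⟨rfl, hfr⟩ := nullCode_inj hcode
          left
          refine Atom.subst_congr (fun s hs => ?_)
          match s with
          | .const cc => rfl
          | .null m => exact absurd ((hover σ' hσ').2.2.2 _ hs) (by simp [Term.noNull])
          | .var w =>
            simp only [extH]
            by_cases hw : w ∈ σ'.frontier
            · simp [hw, hfr w hw]
            · simp [hw, hcode]

end Fresh
/- ### Part C : existence of most general unifiers -/

section MGU

variable (U : Finset Atom)

/-- a term appears in U -/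
def Appears (t : Term) : Prop := ∃ a ∈ U, t ∈ a.args

/-- same-position relation between terms of U -/
def PosRel (t t' : Term) : Prop :=
  ∃ a ∈ U, ∃ b ∈ U, ∃ i : ℕ, a.args[i]? = some t ∧ b.args[i]? = some t'

/-- equivalence generated -/
def ERel : Term → Term → Prop := Relation.EqvGen (PosRel U)

theorem ERel.refl (t : Term) : ERel U t t := Relation.EqvGen.refl t
variable {U}

theorem ERel.symm {t t' : Term} (h : ERel U t t') : ERel U t' t := Relation.EqvGen.symm _ _ h
theorem ERel.trans {t t' t'' : Term} (h : ERel U t t') (h' : ERel U t' t'') :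
    ERel U t t'' := Relation.EqvGen.trans _ _ _ h h' 

theorem unifier_eq_of_PosRel {u : Term → Term} (hu : IsUnifier u U) {t t' : Term}
    (h : PosRel U t t') : u t = u t' := by
  obtain ⟨a, ha, b, hb, i, hat, hbt⟩ := h
  have := hu.2 a ha b hb
  have h1 : (a.subst u).args[i]? = (b.subst u).args[i]? := by rw [this]
  rw [Atom.getElem?_subst, Atom.getElem?_subst, hat, hbt] at h1
  simpa using h1

theorem unifier_eq_of_ERel {u : Term → Term} (hu : IsUnifier u U) {t t' : Term}
    (h : ERel U t t') : u t = u t' := by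
  induction h with
  | rel _ _ h => exact unifier_eq_of_PosRel hu h
  | refl => rfl
  | symm _ _ _ ih => exact ih.symm
  | trans _ _ _ _ _ ih1 ih2 => exact ih1.trans ih2

theorem appears_of_PosRel {t t' : Term} (h : PosRel U t t') :
    Appears U t ∧ Appears U t' := by
  obtain ⟨a, ha, b, hb, i, hat, hbt⟩ := h
  exact ⟨⟨a, ha, List.mem_iff_getElem?.2 ⟨i, hat⟩⟩, ⟨b, hb, List.mem_iff_getElem?.2 ⟨i, hbt⟩⟩⟩

theorem ERel_cases {t t' : Term} (h : ERel U t t') :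
    t = t' ∨ (Appears U t ∧ Appears U t') := by
  induction h with
  | rel _ _ h => exact Or.inr (appears_of_PosRel h)
  | refl => exact Or.inl rfl
  | symm _ _ _ ih => tauto
  | trans _ _ _ _ _ ih1 ih2 =>
    rcases ih1 with rfl | ih1
    · exact ih2
    · rcases ih2 with rfl | ih2
      · exact Or.inr ih1
      · exact Or.inr ⟨ih1.1, ih2.2⟩

open Classical in
/-- canonical representative of an ERel class -/
noncomputable def repE (U : Finset Atom) (t : Term) : Term :=
  if hc : ∃ c, ERel U t (.const c) then .const hc.choose
  else
    (Encodable.decode (Nat.find (⟨Encodable.encode t, t, by simp, ERel.refl U t⟩ :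
      ∃ n : ℕ, ∃ s, (Encodable.decode n : Option Term) = some s ∧ ERel U t s))).getD t

theorem repE_rel (t : Term) : ERel U t (repE U t) := by
  unfold repE
  split
  · next hc => exact hc.choose_spec
  · next hc =>
    have he : ∃ n : ℕ, ∃ s, (Encodable.decode n : Option Term) = some s ∧ ERel U t s :=
      ⟨Encodable.encode t, t, by simp, ERel.refl U t⟩
    obtain ⟨s, hs1, hs2⟩ := Nat.find_spec he
    rw [show (Nat.find (⟨Encodable.encode t, t, by simp, ERel.refl U t⟩ :
      ∃ n : ℕ, ∃ s, (Encodable.decode n : Option Term) = some s ∧ ERel U t s)) = Nat.find he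
      from rfl, hs1]
    exact hs2

theorem repE_congr {u : Term → Term} (hu : IsUnifier u U) {t t' : Term}
    (h : ERel U t t') : repE U t = repE U t' := by
  unfold repE
  have hiff : ∀ s, ERel U t s ↔ ERel U t' s :=
    fun s => ⟨fun hh => (h.symm).trans hh, fun hh => h.trans hh⟩
  by_cases hc : ∃ c, ERel U t (.const c)
  · have hc' : ∃ c, ERel U t' (.const c) := ⟨hc.choose, (hiff _).1 hc.choose_spec⟩
    rw [dif_pos hc, dif_pos hc']
    -- the two chosen constants are ERel-related, hence equal under u
    have h1 : ERel U (.const hc.choose) (.const hc'.choose) :=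
      (hc.choose_spec.symm).trans ((hiff _).2 hc'.choose_spec)
    have := unifier_eq_of_ERel hu h1
    rw [hu.1, hu.1] at this
    rw [this]
  · have hc' : ¬ ∃ c, ERel U t' (.const c) := by
      rintro ⟨c, hcc⟩; exact hc ⟨c, (hiff _).2 hcc⟩
    rw [dif_neg hc, dif_neg hc']
    have he : ∃ n : ℕ, ∃ s, (Encodable.decode n : Option Term) = some s ∧ ERel U t s :=
      ⟨Encodable.encode t, t, by simp, ERel.refl U t⟩
    have he' : ∃ n : ℕ, ∃ s, (Encodable.decode n : Option Term) = some s ∧ ERel U t' s :=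
      ⟨Encodable.encode t', t', by simp, ERel.refl U t'⟩
    have hfind : Nat.find he = Nat.find he' := by
      congr 1
      ext n
      exact ⟨fun ⟨s, hs1, hs2⟩ => ⟨s, hs1, (hiff s).1 hs2⟩,
        fun ⟨s, hs1, hs2⟩ => ⟨s, hs1, (hiff s).2 hs2⟩⟩
    obtain ⟨s, hs1, hs2⟩ := Nat.find_spec he
    show (Encodable.decode (Nat.find he)).getD t = (Encodable.decode (Nat.find he')).getD t'
    rw [← hfind, hs1]
    simp

open Classical in
/-- the candidate most general unifier -/
noncomputable def mguOf (U : Finset Atom) : Term → Term :=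
  fun t => if Appears U t then repE U t else t

theorem mguOf_rel {t : Term} : ERel U t (mguOf U t) := by
  unfold mguOf
  split
  · exact repE_rel t
  · exact ERel.refl U t

theorem appears_var_iff {v : ℕ} : Appears U (.var v) ↔ v ∈ varsOfSet U := by
  rw [mem_varsOfSet]
  exact ⟨fun ⟨a, ha, hm⟩ => ⟨a, ha, Atom.mem_vars.2 hm⟩,
    fun ⟨a, ha, hm⟩ => ⟨a, ha, Atom.mem_vars.1 hm⟩⟩

theorem mgu_exists (hU : Unifies U) :
    ∃ γ : Term → Term, IsMGU γ U ∧ IdOutside (varsOfSet U) γ := by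
  classical
  obtain ⟨u, hu⟩ := hU
  refine ⟨mguOf U, ⟨⟨?_, ?_⟩, ?_⟩, ?_⟩
  · -- constFix
    intro c
    unfold mguOf
    split
    · next hap =>
      -- repE of a constant is that constant
      unfold repE
      have hc : ∃ c', ERel U (Term.const c) (.const c') := ⟨c, ERel.refl U _⟩
      rw [dif_pos hc]
      have := unifier_eq_of_ERel hu hc.choose_spec
      rw [hu.1, hu.1] at this
      rw [← this]
    · rfl
  · -- unifies
    intro a ha b hb
    have hab := hu.2 a ha b hb
    have hpred : a.pred = b.pred := by
      have : (a.subst u).pred = (b.subst u).pred := by rw [hab]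
      simpa [Atom.subst] using this
    have hlen : a.args.length = b.args.length := by
      have : (a.subst u).args.length = (b.subst u).args.length := by rw [hab]
      simpa [Atom.subst] using this
    simp only [Atom.subst, Atom.mk.injEq]
    refine ⟨hpred, List.ext_getElem? fun i => ?_⟩
    rw [List.getElem?_map, List.getElem?_map]
    rcases h1 : a.args[i]? with _ | t
    · have : b.args[i]? = none := by
        rw [List.getElem?_eq_none_iff] at h1 ⊢; omega
      rw [this]
    · have h2 : ∃ t', b.args[i]? = some t' := by
        have hi : i < a.args.length := by
          by_contra hcon
          rw [List.getElem?_eq_none_iff.2 (by omega)] at h1; cases h1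
        exact ⟨b.args[i]'(hlen ▸ hi), List.getElem?_eq_getElem _⟩
      obtain ⟨t', h2⟩ := h2
      rw [h2]
      simp only [Option.map_some]
      have hrel : PosRel U t t' := ⟨a, ha, b, hb, i, h1, h2⟩
      have hap := appears_of_PosRel hrel
      have : repE U t = repE U t' := repE_congr hu (Relation.EqvGen.rel _ _ hrel)
      simp [mguOf, hap.1, hap.2, this]
  · -- most general
    intro u' hu'
    refine ⟨fun s => if hs : ∃ t, Appears U t ∧ mguOf U t = s then u' hs.choose else u' s,
      fun t => ?_⟩
    beta_reduce
    by_cases hap : Appears U t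
    · have hex : ∃ t', Appears U t' ∧ mguOf U t' = mguOf U t := ⟨t, hap, rfl⟩
      rw [dif_pos hex]
      -- chosen t₀ has mguOf t₀ = mguOf t, hence ERel t₀ t, hence u' equal
      have h1 := hex.choose_spec
      have hrel : ERel U hex.choose t := by
        have r1 : ERel U hex.choose (mguOf U hex.choose) := mguOf_rel
        have r2 : ERel U t (mguOf U t) := mguOf_rel
        rw [h1.2] at r1
        exact r1.trans r2.symm
      exact (unifier_eq_of_ERel hu' hrel).symm
    · have h0 : mguOf U t = t := by simp [mguOf, hap]
      rw [h0]
      have hne : ¬ ∃ t', Appears U t' ∧ mguOf U t' = t := by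
        rintro ⟨t', hap', ht'⟩
        have : ERel U t' t := ht' ▸ (mguOf_rel (t := t'))
        rcases ERel_cases this with rfl | ⟨_, h2⟩
        · exact hap hap'
        · exact hap h2
      rw [dif_neg hne]
  · -- IdOutside
    intro v hv
    have : ¬ Appears U (.var v) := fun h => hv (appears_var_iff.1 h)
    simp [mguOf, this]

end MGU
/- ### Part D : renaming lemmas and sum estimates -/

theorem Atom.vars_subst_ren (a : Atom) (ρ : ℕ → ℕ) :
    (a.subst (renT ρ)).vars = a.vars.image ρ := by
  ext v
  simp only [Atom.mem_vars, Finset.mem_image]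
  constructor
  · intro h
    simp only [Atom.subst, List.mem_map] at h
    obtain ⟨t, ht, hren⟩ := h
    match t, hren with
    | .var w, hren =>
      refine ⟨w, ht, ?_⟩
      simp only [renT] at hren
      injection hren
  · rintro ⟨w, hw, rfl⟩
    simp only [Atom.subst, List.mem_map]
    exact ⟨.var w, hw, rfl⟩

theorem varsOfSet_image_ren (s : Finset Atom) (ρ : ℕ → ℕ) :
    varsOfSet (s.image (Atom.subst (renT ρ))) = (varsOfSet s).image ρ := by
  ext v
  simp only [mem_varsOfSet, Finset.mem_image]
  constructor
  · rintro ⟨a, ⟨b, hb, rfl⟩, hv⟩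
    rw [Atom.vars_subst_ren] at hv
    obtain ⟨w, hw, rfl⟩ := Finset.mem_image.1 hv
    exact ⟨w, ⟨b, hb, hw⟩, rfl⟩
  · rintro ⟨w, ⟨b, hb, hw⟩, rfl⟩
    refine ⟨b.subst (renT ρ), ⟨b, hb, rfl⟩, ?_⟩
    rw [Atom.vars_subst_ren]
    exact Finset.mem_image_of_mem ρ hw

theorem rename_exVars (σ : TGD) {ρ : ℕ → ℕ} (hρ : Function.Injective ρ) :
    (σ.rename ρ).exVars = σ.exVars.image ρ := by
  unfold TGD.exVars TGD.rename
  rw [Atom.vars_subst_ren, varsOfSet_image_ren]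
  exact (Finset.image_sdiff _ _ hρ).symm

theorem rename_exPos (σ : TGD) {ρ : ℕ → ℕ} (hρ : Function.Injective ρ) (i : ℕ) :
    (σ.rename ρ).exPos i ↔ σ.exPos i := by
  unfold TGD.exPos
  constructor
  · rintro ⟨z, hz, hargs⟩
    rw [rename_exVars σ hρ] at hz
    obtain ⟨w, hw, rfl⟩ := Finset.mem_image.1 hz
    refine ⟨w, hw, ?_⟩
    have : (σ.rename ρ).head.args[i]? = (σ.head.args[i]?).map (renT ρ) :=
      Atom.getElem?_subst _ _ _
    rw [this] at hargs
    rcases h1 : σ.head.args[i]? with _ | t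
    · rw [h1] at hargs; cases hargs
    · rw [h1] at hargs
      simp only [Option.map_some, Option.some.injEq] at hargs
      match t, hargs with
      | .var w', hargs =>
        simp only [renT, Term.var.injEq] at hargs
        rw [hρ hargs]
  · rintro ⟨z, hz, hargs⟩
    refine ⟨ρ z, (rename_exVars σ hρ) ▸ Finset.mem_image_of_mem ρ hz, ?_⟩
    have : (σ.rename ρ).head.args[i]? = (σ.head.args[i]?).map (renT ρ) :=
      Atom.getElem?_subst _ _ _
    rw [this, hargs]
    rfl

theorem sum_image_le (s : Finset Atom) (f : Atom → Atom) (g : Atom → ℕ) :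
    ∑ y ∈ s.image f, g y ≤ ∑ x ∈ s, g (f x) := by
  classical
  induction s using Finset.induction with
  | empty => simp
  | @insert a s ha ih =>
    rw [Finset.image_insert, Finset.sum_insert ha]
    by_cases h : f a ∈ s.image f
    · rw [Finset.insert_eq_self.2 h]
      omega
    · rw [Finset.sum_insert h]
      omega

theorem sum_union_le' (s t : Finset Atom) (g : Atom → ℕ) :
    ∑ y ∈ s ∪ t, g y ≤ ∑ y ∈ s, g y + ∑ y ∈ t, g y := by
  classical
  have h2 : ∑ y ∈ (t \ s), g y ≤ ∑ y ∈ t, g y :=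
    Finset.sum_le_sum_of_subset (Finset.sdiff_subset)
  calc ∑ y ∈ s ∪ t, g y = ∑ y ∈ s ∪ (t \ s), g y := by rw [Finset.union_sdiff_self_eq_union]
    _ = ∑ y ∈ s, g y + ∑ y ∈ t \ s, g y := Finset.sum_union (Finset.disjoint_sdiff)
    _ ≤ ∑ y ∈ s, g y + ∑ y ∈ t, g y := Nat.add_le_add_left h2 _

/-- a strict version of `sum_image_le` when two elements collapse -/
theorem sum_image_lt (s : Finset Atom) (f : Atom → Atom) (g : Atom → ℕ)
    (hg : ∀ x, 1 ≤ g x) {b1 b2 : Atom} (hb1 : b1 ∈ s) (hb2 : b2 ∈ s) (hne : b1 ≠ b2)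
    (hf : f b1 = f b2) : ∑ y ∈ s.image f, g y < ∑ x ∈ s, g (f x) := by
  classical
  have himg : s.image f = (s.erase b1).image f := by
    apply Finset.Subset.antisymm
    · intro y hy
      obtain ⟨x, hx, rfl⟩ := Finset.mem_image.1 hy
      by_cases hxb : x = b1
      · subst hxb
        exact Finset.mem_image.2 ⟨b2, Finset.mem_erase.2 ⟨hne.symm, hb2⟩, hf.symm⟩
      · exact Finset.mem_image.2 ⟨x, Finset.mem_erase.2 ⟨hxb, hx⟩, rfl⟩
    · exact Finset.image_subset_image (Finset.erase_subset _ _)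
  rw [himg]
  calc ∑ y ∈ (s.erase b1).image f, g y ≤ ∑ x ∈ s.erase b1, g (f x) := sum_image_le _ _ _
    _ < g (f b1) + ∑ x ∈ s.erase b1, g (f x) := by have := hg (f b1); omega
    _ = ∑ x ∈ s, g (f x) := (Finset.add_sum_erase s (fun x => g (f x)) hb1)
/- ### Part E : the main completeness induction -/

theorem mem_XRewriteOut_reach {Sig : Finset TGD} {q q' : CQ}
    (h : q' ∈ XRewriteOut Sig ∅ q) : Reach Sig ∅ q q' := by
  rcases h with h | ⟨p, hp, hstep⟩
  · rw [Set.mem_singleton_iff] at h; subst h; exact Reach.refl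
  · exact Reach.rw hp hstep

section Main

variable {R : Schema} {Sig : Finset TGD} {D : Finset Atom}

/-- the big constant for the termination measure -/
def CCst (Sig : Finset TGD) : ℕ := Sig.sup (fun σ => σ.body.card) + 2

theorem CCst_pos : 1 ≤ CCst Sig := by unfold CCst; omega

theorem main_lemma (q : CQ)
    (hover : ∀ σ ∈ Sig, σ.overSchema R) (hnf : ∀ σ ∈ Sig, σ.NormalForm)
    (hD : IsDatabase R D) :
    ∀ (μ : ℕ) (q' : CQ) (g : Term → Term),
      Reach Sig ∅ q q' →
      (q' ∈ XRewriteOut Sig ∅ q ∨ ∃ b ∈ q'.body, ¬ Ch D Sig 0 (b.subst g)) →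
      constFix g →
      (∀ b ∈ q'.body, b.subst g ∈ ChI D Sig) →
      (∀ s ∈ q'.head.args, ∃ c, g s = Term.const c) →
      (∑ b ∈ q'.body, CCst Sig ^ dA D Sig (b.subst g)) ≤ μ →
      ∃ q'' ∈ XRewriteOut Sig ∅ q, ∃ g'' : Term → Term,
        IsHom g'' ↑q''.body ↑D ∧ q''.head.args.map g'' = q'.head.args.map g := by
  have doneCase : ∀ (q' : CQ) (g : Term → Term),
      q' ∈ XRewriteOut Sig ∅ q → constFix g →
      (∀ b ∈ q'.body, Ch D Sig 0 (b.subst g)) →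
      ∃ q'' ∈ XRewriteOut Sig ∅ q, ∃ g'' : Term → Term,
        IsHom g'' ↑q''.body ↑D ∧ q''.head.args.map g'' = q'.head.args.map g := by
    intro q' g hQ hg hall
    refine ⟨q', hQ, g, ⟨hg, ?_⟩, rfl⟩
    intro a ha
    rw [Finset.mem_coe] at ha ⊢
    exact hall a ha
  intro μ
  induction μ with
  | zero =>
    intro q' g hreach hdisj hg hallI hconst hsum
    -- the body must be empty, i.e. every atom is in D (vacuously)
    have hall : ∀ b ∈ q'.body, Ch D Sig 0 (b.subst g) := by
      intro b hb
      exfalso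
      have h1 : CCst Sig ^ dA D Sig (b.subst g) ≤ 0 := le_trans
        (Finset.single_le_sum (f := fun b => CCst Sig ^ dA D Sig (b.subst g))
          (fun _ _ => Nat.zero_le _) hb) hsum
      have h2 : 0 < CCst Sig ^ dA D Sig (b.subst g) :=
        Nat.pow_pos (by have := CCst_pos (Sig := Sig); omega)
      omega
    rcases hdisj with hQ | ⟨b, hb, hnb⟩
    · exact doneCase q' g hQ hg hall
    · exact absurd (hall b hb) hnb
  | succ μ ih =>
    intro q' g hreach hdisj hg hallI hconst hsum
    by_cases hall : ∀ b ∈ q'.body, Ch D Sig 0 (b.subst g)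
    · rcases hdisj with hQ | ⟨b, hb, hnb⟩
      · exact doneCase q' g hQ hg hall
      · exact absurd (hall b hb) hnb
    · push_neg at hall
      obtain ⟨b1, hb1, hnot1⟩ := hall
      -- a deepest atom a0 in the image of the body
      obtain ⟨b0, hb0, hmax⟩ := Finset.exists_max_image q'.body
        (fun b => dA D Sig (b.subst g)) ⟨b1, hb1⟩
      set a0 := b0.subst g with ha0def
      set da := dA D Sig a0 with hdadef
      have hda1 : 1 ≤ da := by
        have h1 : 1 ≤ dA D Sig (b1.subst g) := by
          by_contra hcon
          refine hnot1 ?_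
          have h0' : dA D Sig (b1.subst g) = 0 := by omega
          have h1' := Ch_dA (hallI b1 hb1)
          rwa [h0'] at h1'
        exact le_trans h1 (hmax b1 hb1)
      have hCh : Ch D Sig da a0 := Ch_dA (hallI b0 hb0)
      have hCh' : Ch D Sig ((da - 1) + 1) a0 := by rwa [Nat.sub_add_cancel hda1]
      have hCh'' : Ch D Sig (da - 1) a0 ∨
          ∃ σ ∈ Sig, ∃ h : Term → Term, constFix h ∧
            (∀ b ∈ σ.body, Ch D Sig (da - 1) (b.subst h)) ∧
            a0 = σ.head.subst (extH σ h) := hCh'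
      rcases hCh'' with hlow | ⟨σ0, hσ0, h0, hcf0, hprem, ha0eq⟩
      · exact absurd hlow (not_Ch_of_lt_dA (by omega))
      -- the fresh null of a0
      set z := Term.null (nullCode σ0 h0) with hzdef
      have CorA : ∀ k, k < da → ∀ c, Ch D Sig k c → z ∉ c.args := by
        intro k
        induction k using Nat.strong_induction_on with
        | _ k ihk =>
          intro hk c hc hz
          rcases null_descent hover hD k c hc hz with heq | ⟨k', hk', c', hc', hz'⟩
          · rw [heq, ← ha0eq] at hc
            exact absurd hc (not_Ch_of_lt_dA hk)
          · exact ihk k' hk' (by omega) c' hc' hz'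
      have CorB : ∀ c, Ch D Sig da c → z ∈ c.args → c = a0 := by
        intro c hc hz
        rcases null_descent hover hD da c hc hz with heq | ⟨k', hk', c', hc', hz'⟩
        · rw [heq, ← ha0eq]
        · exact absurd hz' (CorA k' hk' c' hc')
      have exNotFrontier : ∀ v ∈ σ0.exVars, v ∉ σ0.frontier := by
        intro v hv hfr
        exact (Finset.mem_sdiff.1 hv).2 (Finset.mem_inter.1 hfr).1
      have CorC1 : ∀ i, σ0.exPos i → a0.args[i]? = some z := by
        rintro i ⟨zv, hzv, hargs⟩
        rw [ha0eq, Atom.getElem?_subst, hargs]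
        simp only [Option.map_some]
        rw [show extH σ0 h0 (Term.var zv) = z from by
          simp [extH, if_neg (exNotFrontier zv hzv), hzdef]]
      have CorC2 : ∀ i, a0.args[i]? = some z → σ0.exPos i := by
        intro i hi
        rw [ha0eq, Atom.getElem?_subst] at hi
        rcases hh : σ0.head.args[i]? with _ | t
        · rw [hh] at hi; cases hi
        · rw [hh] at hi
          simp only [Option.map_some, Option.some.injEq] at hi
          have htmem : t ∈ σ0.head.args := List.mem_iff_getElem?.2 ⟨i, hh⟩
          match t, hi with
          | .null m, hi =>
            exact absurd ((hover σ0 hσ0).2.2.2 _ htmem) (by simp [Term.noNull])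
          | .var v, hi =>
            simp only [extH] at hi
            by_cases hv : v ∈ σ0.frontier
            · rw [if_pos hv] at hi
              -- h0 sends a frontier variable to z : impossible by CorA
              exfalso
              have hvb : v ∈ varsOfSet σ0.body := (Finset.mem_inter.1 hv).1
              obtain ⟨b3, hb3, hvb3⟩ := mem_varsOfSet.1 hvb
              refine CorA (da - 1) (by omega) (b3.subst h0) (hprem b3 hb3) ?_
              simp only [Atom.subst]
              exact hi ▸ List.mem_map.2 ⟨.var v, Atom.mem_vars.1 hvb3, rfl⟩
            · rw [if_neg hv] at hi
              refine ⟨v, ?_, hh⟩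
              rw [TGD.exVars, Finset.mem_sdiff]
              refine ⟨?_, fun hvb => hv (Finset.mem_inter.2 ⟨hvb, ?_⟩)⟩
              · have : v ∈ σ0.head.vars := Atom.mem_vars.2 htmem
                exact this
              · exact Atom.mem_vars.2 htmem
      have CorD : ∀ i j, σ0.exPos i → σ0.exPos j → i = j := by
        rintro i j ⟨zi, hzi, hi⟩ ⟨zj, hzj, hj⟩
        have hz_eq : zi = zj := Finset.card_le_one.1 (hnf σ0 hσ0).1 _ hzi _ hzj
        subst hz_eq
        by_contra hij
        have := two_le_count_of_two_pos hij hi hj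
        have hcount := (hnf σ0 hσ0).2 zi hzi
        rw [Atom.countVar] at hcount
        omega
      -- the preimage set of a0
      classical
      set S := q'.body.filter (fun b => b.subst g = a0) with hSdef
      have hS0 : b0 ∈ S := Finset.mem_filter.2 ⟨hb0, rfl⟩
      have hSsub : S ⊆ q'.body := Finset.filter_subset _ _
      have hSpos : ∀ b ∈ q'.body, ∀ i : ℕ, ∀ t, b.args[i]? = some t → g t = z →
          b ∈ S ∧ σ0.exPos i := by
        intro b hb i t hbi hgt
        have h1 : (b.subst g).args[i]? = some z := by
          rw [Atom.getElem?_subst, hbi, Option.map_some, hgt]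
        have h2 : z ∈ (b.subst g).args := List.mem_iff_getElem?.2 ⟨i, h1⟩
        have h3 : Ch D Sig da (b.subst g) :=
          Ch_mono (hmax b hb) (Ch_dA (hallI b hb))
        have h4 : b.subst g = a0 := CorB _ h3 h2
        exact ⟨Finset.mem_filter.2 ⟨hb, h4⟩, CorC2 i (h4 ▸ h1)⟩
      by_cases hshared : ∃ v, q'.shared v ∧ ∃ b ∈ S, ∃ i : ℕ,
          σ0.exPos i ∧ b.args[i]? = some (Term.var v)
      · -- factorization case
        obtain ⟨v, hsh, b, hbS, i0, hex0, hargs0⟩ := hshared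
        have hgv : g (Term.var v) = z := by
          have hb' : b.subst g = a0 := (Finset.mem_filter.1 hbS).2
          have h1 : (b.subst g).args[i0]? = some (g (Term.var v)) := by
            rw [Atom.getElem?_subst, hargs0]; rfl
          rw [hb', CorC1 i0 hex0] at h1
          exact (Option.some.inj h1).symm
        set SV := q'.body.filter
          (fun b => ∃ i : ℕ, σ0.exPos i ∧ b.args[i]? = some (Term.var v)) with hSVdef
        have hSVsub : SV ⊆ q'.body := Finset.filter_subset _ _
        have hSV_S : ∀ b' ∈ SV, b'.subst g = a0 := by
          intro b' hb'
          obtain ⟨hb'b, i, hex, hargs⟩ := Finset.mem_filter.1 hb'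
          exact (Finset.mem_filter.1 ((hSpos b' hb'b i _ hargs hgv).1)).2
        have hocc : ∀ b' ∈ q'.body, ∀ j : ℕ, b'.args[j]? = some (Term.var v) →
            b' ∈ SV ∧ σ0.exPos j := by
          intro b' hb' j hj
          have h1 := hSpos b' hb' j _ hj hgv
          exact ⟨Finset.mem_filter.2 ⟨hb', j, h1.2, hj⟩, h1.2⟩
        have hvhead : Term.var v ∉ q'.head.args := by
          intro hmem
          obtain ⟨c, hc⟩ := hconst _ hmem
          rw [hgv, hzdef] at hc
          cases hc
        have hcard : 2 ≤ SV.card := by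
          have hsh' : 2 ≤ q'.countVar v := hsh
          rw [CQ.countVar] at hsh'
          have hhead0 : q'.head.countVar v = 0 := by
            rw [Atom.countVar]
            exact List.count_eq_zero.2 hvhead
          have hone : ∀ b' ∈ q'.body, b'.countVar v ≤ 1 := by
            intro b' hb'
            by_contra hcon
            obtain ⟨i, j, hij, hi, hj⟩ := two_pos_of_two_le_count
              (show 2 ≤ b'.args.count (Term.var v) from by rw [Atom.countVar] at hcon; omega)
            exact hij (CorD i j (hocc b' hb' i hi).2 (hocc b' hb' j hj).2)
          have hzero : ∀ b' ∈ q'.body, b' ∉ SV → b'.countVar v = 0 := by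
            intro b' hb' hnb'
            rw [Atom.countVar, List.count_eq_zero]
            intro hmem
            obtain ⟨j, hj⟩ := List.mem_iff_getElem?.1 hmem
            exact hnb' (hocc b' hb' j hj).1
          have hsum_eq : ∑ b' ∈ SV, b'.countVar v = ∑ b' ∈ q'.body, b'.countVar v :=
            Finset.sum_subset hSVsub (fun x hx hnx => hzero x hx hnx)
          have hle : ∑ b' ∈ SV, b'.countVar v ≤ SV.card := by
            calc ∑ b' ∈ SV, b'.countVar v ≤ ∑ _b' ∈ SV, 1 :=
                  Finset.sum_le_sum (fun b' hb' => hone b' (hSVsub hb'))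
              _ = SV.card := by simp
          omega
        have hUni : IsUnifier g SV := by
          refine ⟨hg, fun a ha b hb => ?_⟩
          rw [hSV_S a ha, hSV_S b hb]
        obtain ⟨γ, hMGU, hId⟩ := mgu_exists ⟨g, hUni⟩
        have hfact : Factorizable q' σ0 SV := by
          refine ⟨hSVsub, hcard, ⟨g, hUni⟩, ⟨i0, hex0⟩, v, ?_, ?_⟩
          · intro hv
            obtain ⟨b', hb', hv'⟩ := mem_varsOfSet.1 hv
            obtain ⟨hb'b, hb'n⟩ := Finset.mem_sdiff.1 hb'
            obtain ⟨j, hj⟩ := List.mem_iff_getElem?.1 (Atom.mem_vars.1 hv')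
            exact hb'n (hocc b' hb'b j hj).1
          · intro b' hb'
            exact ⟨(Finset.mem_filter.1 hb').2,
              fun j hj => (hocc b' (hSVsub hb') j hj).2⟩
        have hstep : IsFactStep Sig ∅ q' (q'.subst γ) :=
          ⟨σ0, hσ0, SV, hfact, γ, hMGU, hId,
            fun v hv => absurd hv (Finset.notMem_empty v), rfl⟩
        obtain ⟨δ, hδ⟩ := hMGU.2 g hUni
        have hcomp : ∀ bb : Atom, (bb.subst γ).subst δ = bb.subst g := by
          intro bb
          rw [Atom.subst_subst]
          exact Atom.subst_congr (fun t _ => (hδ t).symm)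
        have hδcf : constFix δ := by
          intro c
          have h1 := hδ (.const c)
          rw [hMGU.1.1 c] at h1
          rw [← h1, hg c]
        have hbody2 : (q'.subst γ).body = q'.body.image (Atom.subst γ) := rfl
        have hnotCh0 : ¬ Ch D Sig 0 ((b0.subst γ).subst δ) := by
          rw [hcomp b0, ← ha0def]
          intro hc
          have : da ≤ 0 := Nat.sInf_le hc
          omega
        have hres := ih (q'.subst γ) δ (Reach.fact hreach hstep)
          (Or.inr ⟨b0.subst γ, by rw [hbody2]; exact Finset.mem_image_of_mem _ hb0, hnotCh0⟩)
          hδcf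
          (by
            intro b2 hb2
            rw [hbody2] at hb2
            obtain ⟨bb, hbb, rfl⟩ := Finset.mem_image.1 hb2
            rw [hcomp bb]
            exact hallI bb hbb)
          (by
            intro s hs
            have hs' : s ∈ q'.head.args.map γ := hs
            obtain ⟨t, ht, rfl⟩ := List.mem_map.1 hs'
            obtain ⟨c, hc⟩ := hconst t ht
            exact ⟨c, by rw [← hδ t]; exact hc⟩)
          (by
            obtain ⟨bx, hbx, by', hby', hbne⟩ := Finset.one_lt_card.1 (by omega : 1 < SV.card)
            have hfeq : bx.subst γ = by'.subst γ := hMGU.1.2 bx hbx by' hby'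
            have h1 : ∑ b2 ∈ q'.body.image (Atom.subst γ), CCst Sig ^ dA D Sig (b2.subst δ)
                < ∑ bb ∈ q'.body, CCst Sig ^ dA D Sig ((bb.subst γ).subst δ) :=
              sum_image_lt q'.body (Atom.subst γ) (fun b2 => CCst Sig ^ dA D Sig (b2.subst δ))
                (fun x => Nat.pow_pos (by have := CCst_pos (Sig := Sig); omega))
                (hSVsub hbx) (hSVsub hby') hbne hfeq
            have h2 : ∑ bb ∈ q'.body, CCst Sig ^ dA D Sig ((bb.subst γ).subst δ)
                = ∑ bb ∈ q'.body, CCst Sig ^ dA D Sig (bb.subst g) :=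
              Finset.sum_congr rfl (fun bb _ => by rw [hcomp bb])
            rw [hbody2]
            omega)
        obtain ⟨q'', hq'', g'', hhom, hmap⟩ := hres
        refine ⟨q'', hq'', g'', hhom, ?_⟩
        rw [hmap]
        show List.map δ (List.map γ q'.head.args) = List.map g q'.head.args
        rw [List.map_map]
        exact List.map_congr_left (fun t _ => (hδ t).symm)
      · -- rewriting case
        push_neg at hshared
        set N := (q'.vars.sup id) + 1 with hNdef
        set ρ : ℕ → ℕ := fun v => v + N with hρdef
        have hρinj : Function.Injective ρ := by
          intro a b h
          simp only [hρdef] at h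
          omega
        have hvarslt : ∀ w ∈ q'.vars, w < N := by
          intro w hw
          have h1 : id w ≤ q'.vars.sup id := Finset.le_sup hw
          simp only [id] at h1
          omega
        have hρnot : ∀ v, ρ v ∉ q'.vars := by
          intro v hv
          have := hvarslt _ hv
          simp only [hρdef] at this
          omega
        set σr := σ0.rename ρ with hσrdef
        have hσrbody : σr.body = σ0.body.image (Atom.subst (renT ρ)) := rfl
        -- the combined unifier
        set u : Term → Term := fun t => match t with
          | .var w => if N ≤ w then
              (if (w - N) ∈ σ0.exVars then z else h0 (.var (w - N)))
            else g (.var w)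
          | t => g t with hudef
        have hu_cf : constFix u := fun c => hg c
        have hbodyNN : ∀ b3 ∈ σ0.body, ∀ t ∈ b3.args, t.noNull :=
          fun b3 hb3 => ((hover σ0 hσ0).2.1 b3 hb3).2
        have hheadNN : ∀ t ∈ σ0.head.args, t.noNull := (hover σ0 hσ0).2.2.2
        have hu1 : ∀ b3 ∈ σ0.body, (b3.subst (renT ρ)).subst u = b3.subst h0 := by
          intro b3 hb3
          rw [Atom.subst_subst]
          refine Atom.subst_congr (fun t ht => ?_)
          match t with
          | .const c => exact (hg c).trans (hcf0 c).symm
          | .null n => exact absurd (hbodyNN b3 hb3 _ ht) (by simp [Term.noNull])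
          | .var w =>
            show u (.var (w + N)) = h0 (.var w)
            have hge : N ≤ w + N := Nat.le_add_left N w
            have hsub : (w + N) - N = w := by omega
            have hwbody : w ∈ varsOfSet σ0.body :=
              mem_varsOfSet.2 ⟨b3, hb3, Atom.mem_vars.2 ht⟩
            have hnex : w ∉ σ0.exVars := fun hx => (Finset.mem_sdiff.1 hx).2 hwbody
            simp only [hudef, if_pos hge, hsub, if_neg hnex]
        have hu2 : σr.head.subst u = a0 := by
          rw [hσrdef]
          show (σ0.head.subst (renT ρ)).subst u = a0
          rw [Atom.subst_subst, ha0eq]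
          refine Atom.subst_congr (fun t ht => ?_)
          match t with
          | .const c => exact hg c
          | .null n => exact absurd (hheadNN _ ht) (by simp [Term.noNull])
          | .var w =>
            show u (.var (w + N)) = extH σ0 h0 (.var w)
            have hge : N ≤ w + N := Nat.le_add_left N w
            have hsub : (w + N) - N = w := by omega
            by_cases hex : w ∈ σ0.exVars
            · have hnf' : w ∉ σ0.frontier := exNotFrontier w hex
              simp only [hudef, if_pos hge, hsub, if_pos hex, extH, if_neg hnf', hzdef]
            · have hwhead : w ∈ σ0.head.vars := Atom.mem_vars.2 ht
              have hwbody : w ∈ varsOfSet σ0.body := by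
                by_contra hcon
                exact hex (Finset.mem_sdiff.2 ⟨hwhead, hcon⟩)
              have hfr : w ∈ σ0.frontier := Finset.mem_inter.2 ⟨hwbody, hwhead⟩
              simp only [hudef, if_pos hge, hsub, if_neg hex, extH, if_pos hfr]
        have hu3 : ∀ b ∈ q'.body, b.subst u = b.subst g := by
          intro b hb
          refine Atom.subst_congr (fun t ht => ?_)
          match t with
          | .const c => rfl
          | .null n => rfl
          | .var w =>
            have hw : w ∈ q'.vars := Finset.mem_union_right _
              (mem_varsOfSet.2 ⟨b, hb, Atom.mem_vars.2 ht⟩)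
            have := hvarslt w hw
            simp only [hudef, if_neg (by omega : ¬ N ≤ w)]
        have hu4 : ∀ t ∈ q'.head.args, u t = g t := by
          intro t ht
          match t with
          | .const c => rfl
          | .null n => rfl
          | .var w =>
            have hw : w ∈ q'.vars := Finset.mem_union_left _ (Atom.mem_vars.2 ht)
            have := hvarslt w hw
            simp only [hudef, if_neg (by omega : ¬ N ≤ w)]
        have helem : ∀ x ∈ S ∪ {σr.head}, x.subst u = a0 := by
          intro x hx
          rcases Finset.mem_union.1 hx with hx | hx
          · rw [hu3 x (hSsub hx)]
            exact (Finset.mem_filter.1 hx).2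
          · rw [Finset.mem_singleton.1 hx]
            exact hu2
        have hSU : IsUnifier u (S ∪ {σr.head}) := by
          refine ⟨hu_cf, fun x hx y hy => ?_⟩
          rw [helem x hx, helem y hy]
        have happ : Applicable q' σr S := by
          refine ⟨⟨b0, hS0⟩, hSsub, ⟨u, hSU⟩, ?_⟩
          intro b hbS i hexr
          have hex : σ0.exPos i := (rename_exPos σ0 hρinj i).1 hexr
          have ha0i : a0.args[i]? = some z := CorC1 i hex
          have hbg : b.subst g = a0 := (Finset.mem_filter.1 hbS).2
          have hbi : (b.args[i]?).map g = some z := by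
            rw [← Atom.getElem?_subst, hbg, ha0i]
          constructor
          · intro c hc
            rw [hc] at hbi
            simp only [Option.map_some, Option.some.injEq] at hbi
            rw [hg c, hzdef] at hbi
            cases hbi
          · intro v hv hshv
            rcases hb' : b.args[i]? with _ | t
            · rw [hb'] at hv; cases hv
            · rw [hb'] at hv
              exact hshared v hshv b hbS i hex (hb' ▸ hv)
        obtain ⟨γ, hMGU, hId⟩ := mgu_exists ⟨u, hSU⟩
        set q2 := (CQ.mk q'.head ((q'.body \ S) ∪ σr.body)).subst γ with hq2def
        have hrw : IsRewriteStep Sig ∅ q' q2 :=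
          ⟨σ0, hσ0, ρ, hρinj, hρnot, S, happ, γ, hMGU, hId,
            fun v hv => absurd hv (Finset.notMem_empty v), rfl⟩
        have hq2Q : q2 ∈ XRewriteOut Sig ∅ q := Or.inr ⟨q', hreach, hrw⟩
        obtain ⟨δ, hδ⟩ := hMGU.2 u hSU
        have hcomp : ∀ bb : Atom, (bb.subst γ).subst δ = bb.subst u := by
          intro bb
          rw [Atom.subst_subst]
          exact Atom.subst_congr (fun t _ => (hδ t).symm)
        have hδcf : constFix δ := by
          intro c
          have h1 := hδ (.const c)
          rw [hMGU.1.1 c] at h1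
          rw [← h1]
          exact hu_cf c
        have hbody2 : q2.body = ((q'.body \ S) ∪ σr.body).image (Atom.subst γ) := rfl
        have hres := ih q2 δ (Reach.rw hreach hrw) (Or.inl hq2Q) hδcf
          (by
            intro b2 hb2
            rw [hbody2] at hb2
            obtain ⟨bb, hbb, rfl⟩ := Finset.mem_image.1 hb2
            rw [hcomp bb]
            rcases Finset.mem_union.1 hbb with hbb | hbb
            · rw [hu3 bb (Finset.mem_sdiff.1 hbb).1]
              exact hallI bb (Finset.mem_sdiff.1 hbb).1
            · rw [hσrbody] at hbb
              obtain ⟨b3, hb3, rfl⟩ := Finset.mem_image.1 hbb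
              rw [hu1 b3 hb3]
              exact ⟨da - 1, hprem b3 hb3⟩)
          (by
            intro s hs
            have hs' : s ∈ q'.head.args.map γ := hs
            obtain ⟨t, ht, rfl⟩ := List.mem_map.1 hs'
            obtain ⟨c, hc⟩ := hconst t ht
            exact ⟨c, by rw [← hδ t, hu4 t ht]; exact hc⟩)
          (by
            -- measure strictly decreases
            have h1 : ∑ b2 ∈ q2.body, CCst Sig ^ dA D Sig (b2.subst δ)
                ≤ ∑ bb ∈ (q'.body \ S) ∪ σr.body,
                    CCst Sig ^ dA D Sig ((bb.subst γ).subst δ) := by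
              rw [hbody2]
              exact sum_image_le _ _ _
            have h2 : ∑ bb ∈ (q'.body \ S) ∪ σr.body,
                CCst Sig ^ dA D Sig ((bb.subst γ).subst δ)
                ≤ ∑ bb ∈ q'.body \ S, CCst Sig ^ dA D Sig ((bb.subst γ).subst δ)
                  + ∑ bb ∈ σr.body, CCst Sig ^ dA D Sig ((bb.subst γ).subst δ) :=
              sum_union_le' _ _ _
            have h4 : ∑ bb ∈ q'.body \ S, CCst Sig ^ dA D Sig ((bb.subst γ).subst δ)
                = ∑ bb ∈ q'.body \ S, CCst Sig ^ dA D Sig (bb.subst g) := by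
              refine Finset.sum_congr rfl (fun bb hbb => ?_)
              rw [hcomp bb, hu3 bb (Finset.mem_sdiff.1 hbb).1]
            have h5 : ∑ bb ∈ σr.body, CCst Sig ^ dA D Sig ((bb.subst γ).subst δ)
                ≤ σr.body.card * (CCst Sig ^ (da - 1)) := by
              have hb : ∀ bb ∈ σr.body,
                  CCst Sig ^ dA D Sig ((bb.subst γ).subst δ) ≤ CCst Sig ^ (da - 1) := by
                intro bb hbb
                rw [hσrbody] at hbb
                obtain ⟨b3, hb3, rfl⟩ := Finset.mem_image.1 hbb
                rw [hcomp, hu1 b3 hb3]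
                refine Nat.pow_le_pow_right (by have := CCst_pos (Sig := Sig); omega) ?_
                exact Nat.sInf_le (hprem b3 hb3)
              calc ∑ bb ∈ σr.body, CCst Sig ^ dA D Sig ((bb.subst γ).subst δ)
                  ≤ ∑ _bb ∈ σr.body, CCst Sig ^ (da - 1) := Finset.sum_le_sum hb
                _ = σr.body.card * (CCst Sig ^ (da - 1)) := by
                    rw [Finset.sum_const, smul_eq_mul]
            have h6 : σr.body.card ≤ σ0.body.card := by
              rw [hσrbody]; exact Finset.card_image_le
            have h7 : σ0.body.card ≤ Sig.sup (fun σ : TGD => σ.body.card) := by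
              simpa using Finset.le_sup (f := fun σ : TGD => σ.body.card) hσ0
            have hCCeq : CCst Sig = Sig.sup (fun σ : TGD => σ.body.card) + 2 := rfl
            have hPpos : 0 < CCst Sig ^ (da - 1) :=
              Nat.pow_pos (by have := CCst_pos (Sig := Sig); omega)
            have h8 : CCst Sig ^ da = CCst Sig ^ (da - 1) * CCst Sig := by
              conv_lhs => rw [show da = (da - 1) + 1 from by omega]
              rw [pow_succ]
            have h6' : σr.body.card * (CCst Sig ^ (da - 1))
                ≤ σ0.body.card * (CCst Sig ^ (da - 1)) :=
              Nat.mul_le_mul_right _ h6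
            have h9 : σ0.body.card * (CCst Sig ^ (da - 1)) < CCst Sig ^ da := by
              have hlt : σ0.body.card < CCst Sig := by omega
              rw [h8, mul_comm (CCst Sig ^ (da - 1)) (CCst Sig)]
              exact Nat.mul_lt_mul_of_lt_of_le hlt (le_refl _) hPpos
            have h10 : CCst Sig ^ da ≤ ∑ bb ∈ S, CCst Sig ^ dA D Sig (bb.subst g) := by
              have hsl := Finset.single_le_sum
                (f := fun bb => CCst Sig ^ dA D Sig (bb.subst g))
                (fun _ _ => Nat.zero_le _) hS0
              have hterm : CCst Sig ^ da = CCst Sig ^ dA D Sig (b0.subst g) := by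
                rw [hdadef, ha0def]
              rw [hterm]
              simpa using hsl
            have h11 : ∑ bb ∈ q'.body \ S, CCst Sig ^ dA D Sig (bb.subst g)
                + ∑ bb ∈ S, CCst Sig ^ dA D Sig (bb.subst g)
                = ∑ bb ∈ q'.body, CCst Sig ^ dA D Sig (bb.subst g) :=
              Finset.sum_sdiff hSsub
            omega)
        obtain ⟨q'', hq'', g'', hhom, hmap⟩ := hres
        refine ⟨q'', hq'', g'', hhom, ?_⟩
        rw [hmap]
        show List.map δ (List.map γ q'.head.args) = List.map g q'.head.args
        rw [List.map_map]
        refine List.map_congr_left (fun t ht => ?_)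
        rw [Function.comp_apply, ← hδ t, hu4 t ht]

end Main

/-- completeness: the certain answers of the rewriting q_Σ are
contained in the evaluation of q_Σ directly over the database D. -/
theorem xrewrite_complete
    (R : Schema) (Sig : Finset TGD) (q : CQ)
    (hq : q.overSchema R)
    (hover : ∀ σ ∈ Sig, σ.overSchema R) (hnf : ∀ σ ∈ Sig, σ.NormalForm)
    (D : Finset Atom) (hD : IsDatabase R D) :
    certAnsUCQ (XRewriteOut Sig ∅ q) D Sig ⊆ ucqEval (XRewriteOut Sig ∅ q) ↑D := by
  intro t ht
  have h1 := ht (ChI D Sig) D_subset_ChI ChI_sat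
  simp only [ucqEval, Set.mem_iUnion] at h1 ⊢
  obtain ⟨q', hq', hmem⟩ := h1
  obtain ⟨hct, g, ⟨hgcf, hghom⟩, hmap⟩ := hmem
  have hconst : ∀ s ∈ q'.head.args, ∃ c, g s = Term.const c := by
    intro s hs
    have : g s ∈ t := hmap ▸ List.mem_map_of_mem hs
    exact hct _ this
  obtain ⟨q'', hq''Q, g'', hhom, hmapeq⟩ :=
    main_lemma q hover hnf hD
      (∑ b ∈ q'.body, CCst Sig ^ dA D Sig (b.subst g)) q' g
      (mem_XRewriteOut_reach hq') (Or.inl hq') hgcf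
      (fun b hb => hghom b hb) hconst (le_refl _)
  exact ⟨q'', hq''Q, hct, g'', hhom, by rw [hmapeq, hmap]⟩

end OntDB
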